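/- arXiv:math/0502098 — 3 statements merged into one kernel-verified Lean document; each statement's English description precedes it below -/
import Mathlib

section
/- Let T > 0 and let g : ℝ → ℝ^d be Lebesgue integrable. For a positive integer m set Δ_m = T/m and κ_m(s) = ⌊s/Δ_m⌋·Δ_m. Then ∫₀ᵀ ∫₀ᵀ ‖g(κ_m(s + a) − a) − g(s)‖ ds da → 0 as m → ∞. -/
open MeasureTheory Set Filter

lemma per_one {Δ : ℝ} (hΔ : 0 < Δ) {G : ℝ → ENNReal} (hG : Function.Periodic G Δ) (t : ℝ) :
    ∫⁻ u in Ioc t (t + Δ), G u = ∫⁻ u in Ioc 0 Δ, G u := by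
  haveI : Fact (0 < Δ) := ⟨hΔ⟩
  have h1 : ∀ r : ℝ, ∫⁻ u in Ioc r (r + Δ), G u = ∫⁻ b : AddCircle Δ, hG.lift b := by
    intro r
    rw [← AddCircle.lintegral_preimage Δ r]
    exact lintegral_congr fun x => (hG.lift_coe x).symm
  rw [h1 t, ← h1 0, zero_add]

lemma per_n {Δ : ℝ} (hΔ : 0 < Δ) {G : ℝ → ENNReal} (hG : Function.Periodic G Δ) (t : ℝ)
    (n : ℕ) :
    ∫⁻ u in Ioc t (t + n * Δ), G u = n * ∫⁻ u in Ioc 0 Δ, G u := by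
  induction n with
  | zero => simp
  | succ n ih =>
    have h1 : t ≤ t + n * Δ := by nlinarith [Nat.cast_nonneg (α := ℝ) n]
    have hset : Ioc t (t + ((n : ℝ) + 1) * Δ)
        = Ioc t (t + n * Δ) ∪ Ioc (t + n * Δ) (t + n * Δ + Δ) := by
      rw [Set.Ioc_union_Ioc_eq_Ioc h1 (by linarith)]
      ring_nf
    push_cast
    rw [hset, lintegral_union measurableSet_Ioc (Set.Ioc_disjoint_Ioc_of_le le_rfl), ih,
      per_one hΔ hG (t + n * Δ)]
    ring

lemma inner_id {d : ℕ} {T Δ : ℝ} (hΔ : 0 < Δ) {m : ℕ} (hTm : T = (m : ℝ) * Δ)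
    (g : ℝ → EuclideanSpace ℝ (Fin d)) (s : ℝ) :
    (∫⁻ a in Icc (0:ℝ) T, (‖g ((⌊(s + a) / Δ⌋ : ℝ) * Δ - a) - g s‖₊ : ENNReal))
      = (m : ENNReal) * ∫⁻ b in Ioc (0:ℝ) Δ, (‖g (s - b) - g s‖₊ : ENNReal) := by
  set G : ℝ → ENNReal := fun u => (‖g ((⌊u / Δ⌋ : ℝ) * Δ - u + s) - g s‖₊ : ENNReal) with hGdef
  have hper : Function.Periodic G Δ := by
    intro u
    simp only [hGdef]
    have h1 : (u + Δ) / Δ = u / Δ + 1 := by field_simp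
    rw [h1, Int.floor_add_one,
      show ((↑(⌊u / Δ⌋ + 1) : ℝ)) * Δ - (u + Δ) + s = (↑⌊u / Δ⌋ : ℝ) * Δ - u + s from by
        push_cast; ring]
  have e1 : (∫⁻ a in Icc (0:ℝ) T, (‖g ((⌊(s + a) / Δ⌋ : ℝ) * Δ - a) - g s‖₊ : ENNReal))
      = ∫⁻ a in Icc (0:ℝ) T, G (s + a) := by
    apply lintegral_congr
    intro a
    simp only [hGdef]
    rw [show ((⌊(s + a) / Δ⌋ : ℝ) * Δ - (s + a) + s) = (⌊(s + a) / Δ⌋ : ℝ) * Δ - a from by ring]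
  rw [e1, ← Measure.restrict_congr_set Ioc_ae_eq_Icc]
  have e2 : (∫⁻ a in Ioc (0:ℝ) T, G (s + a)) = ∫⁻ u in Ioc s (s + T), G u := by
    have h := (measurePreserving_add_left (volume : Measure ℝ) s).setLIntegral_comp_preimage_emb
      (MeasurableEquiv.addLeft s).measurableEmbedding G (Ioc s (s + T))
    rw [Set.preimage_const_add_Ioc] at h
    simpa using h
  rw [e2, hTm, per_n hΔ hper s m]
  congr 1
  rw [← Measure.restrict_congr_set Ico_ae_eq_Ioc]
  apply setLIntegral_congr_fun measurableSet_Ico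
  intro u hu
  simp only [hGdef]
  have h0 : ⌊u / Δ⌋ = 0 :=
    Int.floor_eq_zero_iff.mpr ⟨div_nonneg hu.1 hΔ.le, (div_lt_one hΔ).mpr hu.2⟩
  rw [h0, show (((0:ℤ) : ℝ)) * Δ - u + s = s - u from by push_cast; ring]
lemma shift_small {d : ℕ} (T : ℝ) (hT : 0 < T) (g : ℝ → EuclideanSpace ℝ (Fin d))
    (hgm : Measurable g) (hg : Integrable g) {ε : ℝ} (hε : 0 < ε) :
    ∃ δ > 0, ∀ b : ℝ, |b| ≤ δ →
      (∫⁻ s in Icc (0:ℝ) T, ‖g (s - b) - g s‖₊) ≤ ENNReal.ofReal ε := by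
  obtain ⟨f, hfc, hfI, hfcont, _⟩ :=
    hg.exists_hasCompactSupport_lintegral_sub_le
      (ε := ENNReal.ofReal (ε / 3)) (by positivity)
  have hu := hfc.uniformContinuous_of_continuous hfcont
  have hε3 : 0 < ε / (3 * (T + 1)) := by positivity
  obtain ⟨δ₀, hδ₀, hδ⟩ := Metric.uniformContinuous_iff.mp hu _ hε3
  refine ⟨δ₀ / 2, by positivity, fun b hb => ?_⟩
  -- pointwise triangle inequality
  have htri : ∀ s : ℝ, (‖g (s - b) - g s‖₊ : ENNReal)
      ≤ (‖g (s - b) - f (s - b)‖₊ : ENNReal) + ‖f (s - b) - f s‖₊ + ‖f s - g s‖₊ := by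
    intro s
    have : ‖g (s - b) - g s‖₊ ≤ ‖g (s - b) - f (s - b)‖₊ + ‖f (s - b) - f s‖₊ + ‖f s - g s‖₊ := by
      calc ‖g (s - b) - g s‖₊
          = ‖(g (s - b) - f (s - b)) + (f (s - b) - f s) + (f s - g s)‖₊ := by
            congr 1; abel
        _ ≤ ‖(g (s - b) - f (s - b)) + (f (s - b) - f s)‖₊ + ‖f s - g s‖₊ := nnnorm_add_le _ _
        _ ≤ ‖g (s - b) - f (s - b)‖₊ + ‖f (s - b) - f s‖₊ + ‖f s - g s‖₊ :=
            add_le_add (nnnorm_add_le _ _) le_rfl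
    exact_mod_cast ENNReal.coe_le_coe.mpr this
  have hm1 : Measurable fun s : ℝ => ((‖g (s - b) - f (s - b)‖₊ : ENNReal)) :=
    (((hgm.comp (measurable_id.sub_const b)).sub
      (hfcont.measurable.comp (measurable_id.sub_const b))).nnnorm).coe_nnreal_ennreal
  have hm2 : Measurable fun s : ℝ => ((‖f (s - b) - f s‖₊ : ENNReal)) :=
    (((hfcont.measurable.comp (measurable_id.sub_const b)).sub hfcont.measurable).nnnorm).coe_nnreal_ennreal
  calc (∫⁻ s in Icc (0:ℝ) T, ‖g (s - b) - g s‖₊)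
      ≤ ∫⁻ s in Icc (0:ℝ) T, ((‖g (s - b) - f (s - b)‖₊ : ENNReal)
          + ‖f (s - b) - f s‖₊ + ‖f s - g s‖₊) := lintegral_mono htri
    _ = (∫⁻ s in Icc (0:ℝ) T, (‖g (s - b) - f (s - b)‖₊ : ENNReal))
          + (∫⁻ s in Icc (0:ℝ) T, (‖f (s - b) - f s‖₊ : ENNReal))
          + ∫⁻ s in Icc (0:ℝ) T, (‖f s - g s‖₊ : ENNReal) := by
        rw [lintegral_add_left' ((show Measurable fun s : ℝ => (‖g (s - b) - f (s - b)‖₊ : ENNReal) + ‖f (s - b) - f s‖₊ from hm1.add hm2).aemeasurable), lintegral_add_left' hm1.aemeasurable]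
    _ ≤ ENNReal.ofReal (ε / 3) + ENNReal.ofReal (ε / 3) + ENNReal.ofReal (ε / 3) := by
        gcongr
        · -- first piece: translation invariance
          calc (∫⁻ s in Icc (0:ℝ) T, (‖g (s - b) - f (s - b)‖₊ : ENNReal))
              ≤ ∫⁻ s : ℝ, (‖g (s - b) - f (s - b)‖₊ : ENNReal) := setLIntegral_le_lintegral _ _
            _ = ∫⁻ s : ℝ, (‖g s - f s‖₊ : ENNReal) := by
                simpa [sub_eq_add_neg] using
                  lintegral_add_right_eq_self (fun s : ℝ => (‖g s - f s‖₊ : ENNReal)) (-b)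
            _ ≤ ENNReal.ofReal (ε / 3) := hfI
        · -- second piece: uniform continuity
          have hpt : ∀ s ∈ Icc (0:ℝ) T, (‖f (s - b) - f s‖₊ : ENNReal)
              ≤ ENNReal.ofReal (ε / (3 * (T + 1))) := by
            intro s _
            have hd : dist (s - b) s < δ₀ := by
              rw [Real.dist_eq]
              have : |s - b - s| = |b| := by rw [show s - b - s = -b by ring, abs_neg]
              rw [this]; linarith
            have := hδ hd
            rw [dist_eq_norm] at this
            rw [← enorm_eq_nnnorm, ← ofReal_norm]
            exact ENNReal.ofReal_le_ofReal this.le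
          calc (∫⁻ s in Icc (0:ℝ) T, (‖f (s - b) - f s‖₊ : ENNReal))
              ≤ ∫⁻ _ in Icc (0:ℝ) T, ENNReal.ofReal (ε / (3 * (T + 1))) :=
                setLIntegral_mono_ae aemeasurable_const (ae_of_all _ hpt)
            _ = ENNReal.ofReal (ε / (3 * (T + 1))) * ENNReal.ofReal T := by
                rw [setLIntegral_const, Real.volume_Icc, sub_zero]
            _ ≤ ENNReal.ofReal (ε / 3) := by
                rw [← ENNReal.ofReal_mul (by positivity)]
                apply ENNReal.ofReal_le_ofReal
                rw [div_mul_eq_mul_div, div_le_div_iff₀ (by positivity) (by norm_num)]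
                nlinarith
        · -- third piece
          calc (∫⁻ s in Icc (0:ℝ) T, (‖f s - g s‖₊ : ENNReal))
              ≤ ∫⁻ s : ℝ, (‖f s - g s‖₊ : ENNReal) := setLIntegral_le_lintegral _ _
            _ = ∫⁻ s : ℝ, (‖g s - f s‖₊ : ENNReal) := by
                congr 1; ext s; rw [← enorm_eq_nnnorm, ← enorm_eq_nnnorm, ← ofReal_norm, ← ofReal_norm, norm_sub_rev]
            _ ≤ ENNReal.ofReal (ε / 3) := hfI
    _ ≤ ENNReal.ofReal ε := by
        rw [← ENNReal.ofReal_add (by positivity) (by positivity),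
          ← ENNReal.ofReal_add (by positivity) (by positivity)]
        apply ENNReal.ofReal_le_ofReal; linarith

set_option maxHeartbeats 1000000 in
/-- The folklore L¹-approximation lemma: for integrable `g`, with `Δ_m = T/m` and
`κ_m(s) = ⌊s/Δ_m⌋Δ_m`, the double integral `∫₀ᵀ∫₀ᵀ ‖g(κ_m(s+a) − a) − g(s)‖ ds da`
tends to `0` as `m → ∞`. -/
theorem stmt4 {d : ℕ} (T : ℝ) (hT : 0 < T) (g : ℝ → EuclideanSpace ℝ (Fin d))
    (hg : Integrable g) :
    Tendsto (fun m : ℕ =>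
        ∫ a in Icc (0:ℝ) T, ∫ s in Icc (0:ℝ) T,
          ‖g ((⌊(s + a) / (T / m)⌋ : ℝ) * (T / m) - a) - g s‖)
      atTop (nhds 0) := by
  obtain ⟨g₀, hg₀m, hgg₀⟩ : ∃ g₀ : ℝ → EuclideanSpace ℝ (Fin d),
      StronglyMeasurable g₀ ∧ g =ᵐ[volume] g₀ :=
    ⟨hg.1.mk g, hg.1.stronglyMeasurable_mk, hg.1.ae_eq_mk⟩
  have hg₀ : Integrable g₀ := hg.congr hgg₀
  have hgm : Measurable g₀ := hg₀m.measurable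
  -- Reduction: replace `g` by the strongly measurable representative `g₀`.
  have key : ∀ m : ℕ,
      (∫ a in Icc (0:ℝ) T, ∫ s in Icc (0:ℝ) T,
        ‖g ((⌊(s + a) / (T / m)⌋ : ℝ) * (T / m) - a) - g s‖)
      = ∫ a in Icc (0:ℝ) T, ∫ s in Icc (0:ℝ) T,
        ‖g₀ ((⌊(s + a) / (T / m)⌋ : ℝ) * (T / m) - a) - g₀ s‖ := by
    intro m
    have hNnull : volume {x | g x ≠ g₀ x} = 0 := ae_iff.mp hgg₀
    have hB : volume (⋃ k : ℤ,
        (fun a : ℝ => (k : ℝ) * (T / m) - a) ⁻¹' {x | g x ≠ g₀ x}) = 0 :=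
      measure_iUnion_null fun k =>
        (Measure.measurePreserving_sub_left volume _).quasiMeasurePreserving.preimage_null hNnull
    apply integral_congr_ae
    apply ae_restrict_of_ae
    filter_upwards [measure_eq_zero_iff_ae_notMem.mp hB] with a ha
    apply integral_congr_ae
    apply ae_restrict_of_ae
    filter_upwards [hgg₀] with s hs
    rw [hs]
    have hXnotN : ((⌊(s + a) / (T / m)⌋ : ℝ) * (T / m) - a) ∉ {x | g x ≠ g₀ x} := by
      intro hmem
      exact ha (Set.mem_iUnion.mpr ⟨⌊(s + a) / (T / m)⌋, hmem⟩)
    simp only [Set.mem_setOf_eq, not_not] at hXnotN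
    rw [hXnotN]
  simp only [key]
  clear key hgg₀ hg
  -- measurability of the two-variable integrands
  have hFm : ∀ m : ℕ, Measurable fun p : ℝ × ℝ =>
      ((‖g₀ ((⌊(p.1 + p.2) / (T / m)⌋ : ℝ) * (T / m) - p.2) - g₀ p.1‖₊ : NNReal) : ENNReal) := by
    intro m
    have h0 : Measurable fun p : ℝ × ℝ => ((⌊(p.1 + p.2) / (T / m)⌋ : ℤ) : ℝ) :=
      (measurable_from_top (f := (Int.cast : ℤ → ℝ))).comp
        ((measurable_fst.add measurable_snd).div_const _).floor
    have h1 : Measurable fun p : ℝ × ℝ => ((⌊(p.1 + p.2) / (T / m)⌋ : ℝ) * (T / m) - p.2) :=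
      (h0.mul_const _).sub measurable_snd
    exact ((hgm.comp h1).sub (hgm.comp measurable_fst)).nnnorm.coe_nnreal_ennreal
  have hGm : Measurable fun p : ℝ × ℝ =>
      ((‖g₀ (p.1 - p.2) - g₀ p.1‖₊ : NNReal) : ENNReal) :=
    ((hgm.comp (measurable_fst.sub measurable_snd)).sub
      (hgm.comp measurable_fst)).nnnorm.coe_nnreal_ennreal
  set Φ : ℝ → ENNReal := fun b =>
    ∫⁻ s in Icc (0:ℝ) T, (‖g₀ (s - b) - g₀ s‖₊ : ENNReal) with hΦdef
  set J : ℕ → ENNReal := fun m => ∫⁻ a in Icc (0:ℝ) T, ∫⁻ s in Icc (0:ℝ) T,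
      (‖g₀ ((⌊(s + a) / (T / m)⌋ : ℝ) * (T / m) - a) - g₀ s‖₊ : ENNReal) with hJdef
  -- the key identity
  have hId : ∀ m : ℕ, 1 ≤ m → J m = (m : ENNReal) * ∫⁻ b in Ioc (0:ℝ) (T / m), Φ b := by
    intro m hm
    have hm0 : (0:ℝ) < m := by exact_mod_cast hm
    have hΔ : 0 < T / m := by positivity
    have hTm : T = (m : ℝ) * (T / m) := by field_simp
    have hswap : J m = ∫⁻ s in Icc (0:ℝ) T, ∫⁻ a in Icc (0:ℝ) T,
        (‖g₀ ((⌊(s + a) / (T / m)⌋ : ℝ) * (T / m) - a) - g₀ s‖₊ : ENNReal) := by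
      rw [hJdef]
      exact lintegral_lintegral_swap ((hFm m).comp measurable_swap).aemeasurable
    rw [hswap]
    calc ∫⁻ s in Icc (0:ℝ) T, ∫⁻ a in Icc (0:ℝ) T,
        (‖g₀ ((⌊(s + a) / (T / m)⌋ : ℝ) * (T / m) - a) - g₀ s‖₊ : ENNReal)
        = ∫⁻ s in Icc (0:ℝ) T, (m : ENNReal) * ∫⁻ b in Ioc (0:ℝ) (T / m),
            (‖g₀ (s - b) - g₀ s‖₊ : ENNReal) :=
          lintegral_congr fun s => inner_id hΔ hTm g₀ s
      _ = (m : ENNReal) * ∫⁻ s in Icc (0:ℝ) T, ∫⁻ b in Ioc (0:ℝ) (T / m),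
            (‖g₀ (s - b) - g₀ s‖₊ : ENNReal) :=
          lintegral_const_mul' _ _ (ENNReal.natCast_ne_top m)
      _ = (m : ENNReal) * ∫⁻ b in Ioc (0:ℝ) (T / m), Φ b := by
          rw [lintegral_lintegral_swap hGm.aemeasurable]
  -- uniform bound on Φ
  have hL : (∫⁻ x, (‖g₀ x‖₊ : ENNReal)) ≠ ⊤ := hg₀.2.ne
  have hΦ2L : ∀ b : ℝ, Φ b ≤ 2 * ∫⁻ x, (‖g₀ x‖₊ : ENNReal) := by
    intro b
    have tri : ∀ s : ℝ, (‖g₀ (s - b) - g₀ s‖₊ : ENNReal)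
        ≤ (‖g₀ (s - b)‖₊ : ENNReal) + ‖g₀ s‖₊ := by
      intro s
      rw [← ENNReal.coe_add]
      exact ENNReal.coe_le_coe.mpr (nnnorm_sub_le _ _)
    calc Φ b ≤ ∫⁻ s in Icc (0:ℝ) T, ((‖g₀ (s - b)‖₊ : ENNReal) + ‖g₀ s‖₊) := lintegral_mono tri
      _ = (∫⁻ s in Icc (0:ℝ) T, (‖g₀ (s - b)‖₊ : ENNReal))
          + ∫⁻ s in Icc (0:ℝ) T, (‖g₀ s‖₊ : ENNReal) :=
          lintegral_add_left'
            ((hgm.comp (measurable_id.sub_const b)).nnnorm.coe_nnreal_ennreal).aemeasurable _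
      _ ≤ (∫⁻ s : ℝ, (‖g₀ (s - b)‖₊ : ENNReal)) + ∫⁻ s : ℝ, (‖g₀ s‖₊ : ENNReal) :=
          add_le_add (setLIntegral_le_lintegral _ _) (setLIntegral_le_lintegral _ _)
      _ = 2 * ∫⁻ x, (‖g₀ x‖₊ : ENNReal) := by
          rw [two_mul]
          congr 1
          simpa [sub_eq_add_neg] using
            lintegral_add_right_eq_self (fun s : ℝ => (‖g₀ s‖₊ : ENNReal)) (-b)
  have hJfin : ∀ m : ℕ, 1 ≤ m → J m ≠ ⊤ := by
    intro m hm
    rw [hId m hm]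
    have hb : (∫⁻ b in Ioc (0:ℝ) (T / m), Φ b)
        ≤ (2 * ∫⁻ x, (‖g₀ x‖₊ : ENNReal)) * volume (Ioc (0:ℝ) (T / m)) := by
      rw [← setLIntegral_const]
      exact setLIntegral_mono_ae aemeasurable_const (ae_of_all _ fun b _ => hΦ2L b)
    apply ne_top_of_le_ne_top _ (mul_le_mul_right hb _)
    apply ENNReal.mul_ne_top (ENNReal.natCast_ne_top m)
    apply ENNReal.mul_ne_top (ENNReal.mul_ne_top (by simp) hL)
    simp [Real.volume_Ioc]
  -- measurability of the inner lintegral as a function of `a`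
  have hKm : ∀ m : ℕ, Measurable fun a : ℝ => ∫⁻ s in Icc (0:ℝ) T,
      (‖g₀ ((⌊(s + a) / (T / m)⌋ : ℝ) * (T / m) - a) - g₀ s‖₊ : ENNReal) := by
    intro m
    exact Measurable.lintegral_prod_right' ((hFm m).comp measurable_swap)
  -- conversion from Bochner integrals to lintegrals
  have hconv : ∀ m : ℕ, 1 ≤ m →
      (∫ a in Icc (0:ℝ) T, ∫ s in Icc (0:ℝ) T,
        ‖g₀ ((⌊(s + a) / (T / m)⌋ : ℝ) * (T / m) - a) - g₀ s‖) = (J m).toReal := by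
    intro m hm
    have h1 : ∀ a : ℝ, (∫ s in Icc (0:ℝ) T,
        ‖g₀ ((⌊(s + a) / (T / m)⌋ : ℝ) * (T / m) - a) - g₀ s‖)
        = (∫⁻ s in Icc (0:ℝ) T,
            (‖g₀ ((⌊(s + a) / (T / m)⌋ : ℝ) * (T / m) - a) - g₀ s‖₊ : ENNReal)).toReal := by
      intro a
      have hmeas : Measurable fun s : ℝ =>
          ‖g₀ ((⌊(s + a) / (T / m)⌋ : ℝ) * (T / m) - a) - g₀ s‖ := by
        have h0 : Measurable fun s : ℝ => ((⌊(s + a) / (T / m)⌋ : ℤ) : ℝ) :=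
          (measurable_from_top (f := (Int.cast : ℤ → ℝ))).comp
            ((measurable_id.add_const a).div_const _).floor
        exact ((hgm.comp ((h0.mul_const _).sub_const a)).sub hgm).norm
      rw [integral_eq_lintegral_of_nonneg_ae (ae_of_all _ fun s => norm_nonneg _)
        hmeas.aestronglyMeasurable]
      congr 1
      exact lintegral_congr fun s => ofReal_norm _
    simp only [h1]
    rw [integral_toReal ((hKm m).aemeasurable)
      (ae_lt_top (hKm m) (by rw [hJdef] at hJfin; exact hJfin m hm))]
  -- the limit of J
  have hJ0 : Tendsto J atTop (nhds 0) := by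
    rw [ENNReal.tendsto_nhds_zero]
    intro ε hε
    have hmin_ne : min 1 ε ≠ ⊤ := ne_top_of_le_ne_top (by simp) (min_le_left _ _)
    set r : ℝ := (min 1 ε).toReal with hrdef
    have hr : 0 < r := ENNReal.toReal_pos (lt_min one_pos hε).ne' hmin_ne
    have hofr : ENNReal.ofReal r ≤ ε := by
      rw [hrdef, ENNReal.ofReal_toReal hmin_ne]; exact min_le_right _ _
    obtain ⟨δ, hδpos, hδ⟩ := shift_small T hT g₀ hgm hg₀ (show 0 < r / T by positivity)
    filter_upwards [(tendsto_const_div_atTop_nhds_zero_nat T).eventually (gt_mem_nhds hδpos),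
      eventually_ge_atTop 1] with m hmδ hm1
    have hm0 : (0:ℝ) < m := by exact_mod_cast hm1
    rw [hId m hm1]
    have hΦε : ∀ b ∈ Ioc (0:ℝ) (T / m), Φ b ≤ ENNReal.ofReal (r / T) := by
      intro b hb
      exact hδ b (by rw [abs_of_pos hb.1]; exact hb.2.trans hmδ.le)
    calc (m : ENNReal) * ∫⁻ b in Ioc (0:ℝ) (T / m), Φ b
        ≤ (m : ENNReal) * (ENNReal.ofReal (r / T) * volume (Ioc (0:ℝ) (T / m))) := by
          gcongr
          rw [← setLIntegral_const]
          exact setLIntegral_mono_ae aemeasurable_const (ae_of_all _ hΦε)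
      _ = ENNReal.ofReal r := by
          rw [Real.volume_Ioc, sub_zero, ← ENNReal.ofReal_mul (by positivity),
            ← ENNReal.ofReal_natCast m, ← ENNReal.ofReal_mul (by positivity)]
          congr 1
          field_simp
      _ ≤ ε := hofr
  have htoReal : Tendsto (fun m => (J m).toReal) atTop (nhds 0) := by
    have h := (ENNReal.tendsto_toReal (a := 0) (by simp)).comp hJ0
    simpa [Function.comp_def] using h
  refine Tendsto.congr' ?_ htoReal
  filter_upwards [eventually_ge_atTop 1] with m hm
  exact (hconv m hm).symm
end

section
/- Let M, γ ∈ ℝ with γ < M and λ > 0. For each t > 0 let ξ_t be a real random variable on a probability space (Ω_t, F_t, P_t) and A_t ∈ F_t an event such that ξ_t ≤ M t almost surely, ξ_t ≤ γ t almost surely on A_t, and P_t(A_tᶜ) ≤ e^{−λ t} for all sufficiently large t. Then limsup_{z→0⁺} limsup_{t→∞} (z t)^{−1} log E[e^{z ξ_t}] ≤ γ; in particular this double upper limit is strictly less than M. -/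
open MeasureTheory Set Filter

/-- If `ξ_t ≤ Mt` a.s., `ξ_t ≤ γt` a.s. on `A_t` with `γ < M`, and
`P_t(A_tᶜ) ≤ e^{−λt}` for large `t`, then
`limsup_{z→0⁺} limsup_{t→∞} (zt)⁻¹ log E[e^{zξ_t}] ≤ γ < M`. -/
theorem stmt14 (M γ lam : ℝ) (hγM : γ < M) (hlam : 0 < lam)
    (Ω : ℝ → Type*) [∀ t, MeasurableSpace (Ω t)] (P : ∀ t, Measure (Ω t))
    [∀ t, IsProbabilityMeasure (P t)]
    (ξ : ∀ t, Ω t → ℝ) (hξ : ∀ t, Measurable (ξ t))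
    (A : ∀ t, Set (Ω t)) (hAmeas : ∀ t, MeasurableSet (A t))
    (hM : ∀ t, 0 < t → ∀ᵐ ω ∂P t, ξ t ω ≤ M * t)
    (hA : ∀ t, 0 < t → ∀ᵐ ω ∂P t, ω ∈ A t → ξ t ω ≤ γ * t)
    (hP : ∃ t₀ : ℝ, ∀ t ≥ t₀, P t (A t)ᶜ ≤ ENNReal.ofReal (Real.exp (-lam * t))) :
    Filter.limsup (fun z : ℝ =>
        Filter.limsup (fun t : ℝ =>
            (((z * t)⁻¹ * Real.log (∫ ω, Real.exp (z * ξ t ω) ∂P t) : ℝ) : EReal))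
          atTop)
      (nhdsWithin 0 (Set.Ioi 0)) ≤ (γ : EReal) ∧
    Filter.limsup (fun z : ℝ =>
        Filter.limsup (fun t : ℝ =>
            (((z * t)⁻¹ * Real.log (∫ ω, Real.exp (z * ξ t ω) ∂P t) : ℝ) : EReal))
          atTop)
      (nhdsWithin 0 (Set.Ioi 0)) < (M : EReal) := by
  obtain ⟨t₀, ht₀⟩ := hP
  have hMγ : 0 < M - γ := sub_pos.mpr hγM
  set c := lam / (M - γ) with hc
  have hcpos : 0 < c := div_pos hlam hMγ
  -- key: for each small positive z, inner limsup ≤ γ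
  have key : ∀ z : ℝ, 0 < z → z ≤ c →
      Filter.limsup (fun t : ℝ =>
          (((z * t)⁻¹ * Real.log (∫ ω, Real.exp (z * ξ t ω) ∂P t) : ℝ) : EReal))
        atTop ≤ (γ : EReal) := by
    intro z hz hzc
    have hzMγ : z * (M - γ) ≤ lam := by
      calc z * (M - γ) ≤ c * (M - γ) := by nlinarith
        _ = lam := by rw [hc]; field_simp
    have hbound : ∀ᶠ t : ℝ in atTop,
        (((z * t)⁻¹ * Real.log (∫ ω, Real.exp (z * ξ t ω) ∂P t) : ℝ) : EReal)
          ≤ ((γ + Real.log 2 / (z * t) : ℝ) : EReal) := by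
      filter_upwards [eventually_ge_atTop t₀, eventually_gt_atTop (0 : ℝ)] with t ht ht0
      rw [EReal.coe_le_coe_iff]
      have hzt : 0 < z * t := mul_pos hz ht0
      set g : Ω t → ℝ := fun ω => Real.exp (z * ξ t ω) with hg
      have hgmeas : Measurable g := ((hξ t).const_mul z).exp
      have hint : Integrable g (P t) := by
        refine Integrable.mono' (integrable_const (Real.exp (z * (M * t))))
          hgmeas.aestronglyMeasurable ?_
        filter_upwards [hM t ht0] with ω hω
        rw [Real.norm_eq_abs, abs_of_pos (Real.exp_pos _)]
        exact Real.exp_le_exp.mpr (by nlinarith)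
      have hIpos : 0 < ∫ ω, g ω ∂P t := integral_exp_pos hint
      -- bound on A t
      have h1 : ∫ ω in A t, g ω ∂P t ≤ Real.exp (z * (γ * t)) := by
        have hb : g ≤ᵐ[(P t).restrict (A t)] fun _ => Real.exp (z * (γ * t)) := by
          rw [EventuallyLE, ae_restrict_iff' (hAmeas t)]
          filter_upwards [hA t ht0] with ω hω hmem
          exact Real.exp_le_exp.mpr (by nlinarith [hω hmem])
        calc ∫ ω in A t, g ω ∂P t ≤ ∫ _ω in A t, Real.exp (z * (γ * t)) ∂P t :=
              setIntegral_mono_ae_restrict hint.restrict (integrable_const _).restrict hb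
          _ = (P t (A t)).toReal * Real.exp (z * (γ * t)) := by
              rw [setIntegral_const, smul_eq_mul]; rfl
          _ ≤ 1 * Real.exp (z * (γ * t)) := by
              gcongr
              exact ENNReal.toReal_le_of_le_ofReal zero_le_one (by simp [prob_le_one])
          _ = Real.exp (z * (γ * t)) := one_mul _
      -- bound on (A t)ᶜ
      have hPc : (P t (A t)ᶜ).toReal ≤ Real.exp (-lam * t) := by
        have := ht₀ t ht
        calc (P t (A t)ᶜ).toReal ≤ (ENNReal.ofReal (Real.exp (-lam * t))).toReal :=
              ENNReal.toReal_mono ENNReal.ofReal_ne_top this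
          _ = Real.exp (-lam * t) := ENNReal.toReal_ofReal (Real.exp_pos _).le
      have h2 : ∫ ω in (A t)ᶜ, g ω ∂P t ≤ Real.exp (-lam * t) * Real.exp (z * (M * t)) := by
        have hb : g ≤ᵐ[(P t).restrict (A t)ᶜ] fun _ => Real.exp (z * (M * t)) := by
          refine ae_restrict_of_ae ?_
          filter_upwards [hM t ht0] with ω hω
          exact Real.exp_le_exp.mpr (by nlinarith)
        calc ∫ ω in (A t)ᶜ, g ω ∂P t ≤ ∫ _ω in (A t)ᶜ, Real.exp (z * (M * t)) ∂P t :=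
              setIntegral_mono_ae_restrict hint.restrict (integrable_const _).restrict hb
          _ = (P t (A t)ᶜ).toReal * Real.exp (z * (M * t)) := by
              rw [setIntegral_const, smul_eq_mul]; rfl
          _ ≤ Real.exp (-lam * t) * Real.exp (z * (M * t)) := by
              gcongr
      have hcomb : ∫ ω, g ω ∂P t ≤ 2 * Real.exp (z * (γ * t)) := by
        have hsplit : ∫ ω, g ω ∂P t
            = ∫ ω in A t, g ω ∂P t + ∫ ω in (A t)ᶜ, g ω ∂P t :=
          (integral_add_compl (hAmeas t) hint).symm
        have hexp : Real.exp (-lam * t) * Real.exp (z * (M * t)) ≤ Real.exp (z * (γ * t)) := by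
          rw [← Real.exp_add]
          exact Real.exp_le_exp.mpr (by nlinarith)
        rw [hsplit]; nlinarith [h1, h2]
      have hlog : Real.log (∫ ω, g ω ∂P t) ≤ Real.log 2 + z * (γ * t) := by
        calc Real.log (∫ ω, g ω ∂P t) ≤ Real.log (2 * Real.exp (z * (γ * t))) :=
              Real.log_le_log hIpos hcomb
          _ = Real.log 2 + z * (γ * t) := by
              rw [Real.log_mul two_ne_zero (Real.exp_ne_zero _), Real.log_exp]
      have heq : (z * t)⁻¹ * (Real.log 2 + z * (γ * t)) = γ + Real.log 2 / (z * t) := by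
        field_simp; ring
      calc (z * t)⁻¹ * Real.log (∫ ω, g ω ∂P t)
          ≤ (z * t)⁻¹ * (Real.log 2 + z * (γ * t)) := by
            exact mul_le_mul_of_nonneg_left hlog (inv_nonneg.mpr hzt.le)
        _ = γ + Real.log 2 / (z * t) := heq
    have hv : Tendsto (fun t : ℝ => ((γ + Real.log 2 / (z * t) : ℝ) : EReal))
        atTop (nhds (γ : EReal)) := by
      rw [show ((γ : ℝ) : EReal) = (((γ + 0 : ℝ)) : EReal) by norm_num]
      rw [EReal.tendsto_coe]
      exact tendsto_const_nhds.add
        (Tendsto.div_atTop tendsto_const_nhds (Tendsto.const_mul_atTop hz tendsto_id))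
    calc Filter.limsup (fun t : ℝ =>
            (((z * t)⁻¹ * Real.log (∫ ω, Real.exp (z * ξ t ω) ∂P t) : ℝ) : EReal)) atTop
        ≤ Filter.limsup (fun t : ℝ => ((γ + Real.log 2 / (z * t) : ℝ) : EReal)) atTop :=
          limsup_le_limsup hbound
      _ = (γ : EReal) := hv.limsup_eq
  have h1 : Filter.limsup (fun z : ℝ =>
      Filter.limsup (fun t : ℝ =>
          (((z * t)⁻¹ * Real.log (∫ ω, Real.exp (z * ξ t ω) ∂P t) : ℝ) : EReal))
        atTop) (nhdsWithin 0 (Set.Ioi 0)) ≤ (γ : EReal) := by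
    refine limsup_le_of_le (by isBoundedDefault) ?_
    filter_upwards [Ioo_mem_nhdsGT hcpos] with z hz
    exact key z hz.1 hz.2.le
  exact ⟨h1, lt_of_le_of_lt h1 (by exact_mod_cast hγM)⟩
end

section
/- Let T > 0 and let H : ℝ^d × ℝ^d → ℝ be jointly continuous with β ↦ H(x,β) convex for each x and H(x,0) = 0 for all x, and define L(x,α) = sup_{β∈ℝ^d}(⟨α,β⟩ − H(x,β)) ∈ [0,+∞]. Let v : [0,T] → ℝ^d be bounded and Borel measurable, and let ψⁿ, ψ : [0,T] → ℝ^d be continuous with ψⁿ → ψ uniformly on [0,T]. Then liminf_{n→∞} ∫₀ᵀ L(ψⁿ_t, v_t) dt ≥ ∫₀ᵀ L(ψ_t, v_t) dt, the integrals being taken in [0,+∞]. -/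
open MeasureTheory Set Filter
open scoped ENNReal

private lemma iSup_eq_iSup_denseSeq {E : Type*} [MetricSpace E] (F : E → ℝ≥0∞)
    (hF : Continuous F) (u : ℕ → E) (hu : DenseRange u) :
    ⨆ β, F β = ⨆ n, F (u n) := by
  refine le_antisymm (iSup_le fun β => ?_) (iSup_le fun n => le_iSup F (u n))
  obtain ⟨w, hw1, hw2⟩ := mem_closure_iff_seq_limit.1 (hu β)
  refine le_of_tendsto' ((hF.tendsto β).comp hw2) fun k => ?_
  obtain ⟨n, hn⟩ := hw1 k
  show F (w k) ≤ _
  rw [← hn]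
  exact le_iSup (fun n => F (u n)) n

/-- Lower semicontinuity of the auxiliary action functional in the frozen argument:
if `ψⁿ → ψ` uniformly on `[0,T]` and `v` is bounded measurable, then
`liminf_n ∫₀ᵀ L(ψⁿ_t, v_t) dt ≥ ∫₀ᵀ L(ψ_t, v_t) dt` in `[0,∞]`, where
`L(x,α) = sup_β (⟨α,β⟩ − H(x,β))`. -/
theorem stmt19 {d : ℕ} (T : ℝ) (hT : 0 < T)
    (H : EuclideanSpace ℝ (Fin d) → EuclideanSpace ℝ (Fin d) → ℝ)
    (hHc : Continuous fun p : EuclideanSpace ℝ (Fin d) × EuclideanSpace ℝ (Fin d) => H p.1 p.2)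
    (hconv : ∀ x, ConvexOn ℝ Set.univ (H x))
    (h0 : ∀ x, H x 0 = 0)
    (L : EuclideanSpace ℝ (Fin d) → EuclideanSpace ℝ (Fin d) → ℝ≥0∞)
    (hL : ∀ x α, L x α = ⨆ β, ENNReal.ofReal ((inner ℝ α β : ℝ) - H x β))
    (v : ℝ → EuclideanSpace ℝ (Fin d)) (hv : Measurable v)
    (hvbdd : ∃ C : ℝ, ∀ t, ‖v t‖ ≤ C)
    (ψn : ℕ → ℝ → EuclideanSpace ℝ (Fin d)) (ψ : ℝ → EuclideanSpace ℝ (Fin d))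
    (hψnc : ∀ n, Continuous (ψn n)) (hψc : Continuous ψ)
    (hconv' : TendstoUniformlyOn ψn ψ atTop (Icc 0 T)) :
    ∫⁻ t in Icc (0:ℝ) T, L (ψ t) (v t) ≤
      Filter.liminf (fun n => ∫⁻ t in Icc (0:ℝ) T, L (ψn n t) (v t)) atTop := by
  classical
  obtain ⟨u, hu⟩ : ∃ u : ℕ → EuclideanSpace ℝ (Fin d), DenseRange u :=
    ⟨TopologicalSpace.denseSeq _, TopologicalSpace.denseRange_denseSeq _⟩
  have hcontβ : ∀ (x α : EuclideanSpace ℝ (Fin d)),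
      Continuous fun β => ENNReal.ofReal ((inner ℝ α β : ℝ) - H x β) := fun x α =>
    ENNReal.continuous_ofReal.comp ((continuous_const.inner continuous_id).sub
      (hHc.comp (Continuous.prodMk_right x)))
  have hLc : ∀ x α, L x α = ⨆ n, ENNReal.ofReal ((inner ℝ α (u n) : ℝ) - H x (u n)) := by
    intro x α
    rw [hL]
    exact iSup_eq_iSup_denseSeq _ (hcontβ x α) u hu
  have hmeas : ∀ n, Measurable fun t => L (ψn n t) (v t) := by
    intro n
    simp only [hLc]
    apply Measurable.iSup
    intro k
    apply ENNReal.measurable_ofReal.comp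
    apply Measurable.sub
    · exact (Continuous.inner continuous_id continuous_const).measurable.comp hv
    · exact ((hHc.comp ((hψnc n).prodMk continuous_const)).measurable)
  have key : ∫⁻ t in Icc (0:ℝ) T, L (ψ t) (v t)
      ≤ ∫⁻ t in Icc (0:ℝ) T, liminf (fun n => L (ψn n t) (v t)) atTop := by
    refine setLIntegral_mono' measurableSet_Icc fun t ht => ?_
    have hconv_t : Tendsto (fun n => ψn n t) atTop (nhds (ψ t)) := hconv'.tendsto_at ht
    rw [hL]
    refine iSup_le fun β => ?_
    have h1 : Tendsto (fun n => ENNReal.ofReal ((inner ℝ (v t) β : ℝ) - H (ψn n t) β)) atTop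
        (nhds (ENNReal.ofReal ((inner ℝ (v t) β : ℝ) - H (ψ t) β))) := by
      apply (ENNReal.continuous_ofReal.tendsto _).comp
      exact tendsto_const_nhds.sub
        ((hHc.tendsto _).comp (hconv_t.prodMk_nhds tendsto_const_nhds))
    have h2 : ∀ n, ENNReal.ofReal ((inner ℝ (v t) β : ℝ) - H (ψn n t) β) ≤ L (ψn n t) (v t) := by
      intro n; rw [hL]
      exact le_iSup (fun β => ENNReal.ofReal ((inner ℝ (v t) β : ℝ) - H (ψn n t) β)) β
    calc ENNReal.ofReal ((inner ℝ (v t) β : ℝ) - H (ψ t) β)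
        = liminf (fun n => ENNReal.ofReal ((inner ℝ (v t) β : ℝ) - H (ψn n t) β)) atTop :=
          h1.liminf_eq.symm
      _ ≤ liminf (fun n => L (ψn n t) (v t)) atTop :=
          liminf_le_liminf (Eventually.of_forall h2)
  exact key.trans (lintegral_liminf_le hmeas)
end
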